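/- Let (A,m) be a Noetherian local ring, U a bounded-above complex of finitely generated projective A-modules, V ⊆ U a subcomplex with V^n a direct summand of U^n for all n and V^n = U^n for all n ≥ m. Let W be a bounded-above complex of finitely generated projectives with H^n(W) = 0 for all n ≤ m. If g : U → W is a chain map whose restriction to V is null-homotopic, then g itself is null-homotopic. -/

import Mathlib

open CategoryTheory Limits

/-- extension of null-homotopies. `(A, m)` Noetherian local, `U` a
bounded-above complex of finitely generated projective `A`-modules, `V ⊆ U` a subcomplex
(given by a degreewise split monomorphism `i : V ⟶ U`) with `V^n = U^n` for `n ≥ m`,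
and `W` bounded above with `H^n(W) = 0` for `n ≤ m`. If `g : U ⟶ W` restricts to a
null-homotopic map on `V`, then `g` is null-homotopic. -/
theorem extend_null_homotopy
    (A : Type) [CommRing A] [IsNoetherianRing A] [IsLocalRing A]
    (U V W : CochainComplex (ModuleCat.{0} A) ℤ)
    (hbddU : ∃ N : ℤ, ∀ n : ℤ, N < n → IsZero (U.X n))
    (hbddV : ∃ N : ℤ, ∀ n : ℤ, N < n → IsZero (V.X n))
    (hbddW : ∃ N : ℤ, ∀ n : ℤ, N < n → IsZero (W.X n))
    (hfgU : ∀ n : ℤ, Module.Finite A (U.X n)) (hprojU : ∀ n : ℤ, Module.Projective A (U.X n))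
    (hfgV : ∀ n : ℤ, Module.Finite A (V.X n)) (hprojV : ∀ n : ℤ, Module.Projective A (V.X n))
    (hfgW : ∀ n : ℤ, Module.Finite A (W.X n)) (hprojW : ∀ n : ℤ, Module.Projective A (W.X n))
    (m : ℤ)
    (i : V ⟶ U)
    -- `V^n` is a direct summand of `U^n` for every `n`:
    (hsplit : ∀ n : ℤ, ∃ p : U.X n ⟶ V.X n, i.f n ≫ p = 𝟙 (V.X n))
    -- `V^n = U^n` for `n ≥ m`:
    (heq : ∀ n : ℤ, m ≤ n → IsIso (i.f n))
    -- `H^n(W) = 0` for `n ≤ m`: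
    (hW : ∀ n : ℤ, n ≤ m → IsZero (W.homology n))
    (g : U ⟶ W)
    (hg : Nonempty (Homotopy (i ≫ g) 0)) :
    Nonempty (Homotopy g 0) := by
  classical
  obtain ⟨h⟩ := hg
  -- Step 0: the lifting lemma coming from exactness of `W` in degrees `≤ m`.
  have key : ∀ n : ℤ, n ≤ m → ∀ φ : U.X n ⟶ W.X n, φ ≫ W.d n (n + 1) = 0 →
      ∃ t : U.X n ⟶ W.X (n - 1), t ≫ W.d (n - 1) n = φ := by
    intro n hn φ hφ
    have hex : W.ExactAt n := (W.exactAt_iff_isZero_homology n).mpr (hW n hn)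
    rw [W.exactAt_iff' (n - 1) n (n + 1) (by simp) (by simp)] at hex
    rw [ShortComplex.moduleCat_exact_iff] at hex
    haveI : Module.Projective A (U.X n) := hprojU n
    have hmem : ∀ x : W.X (n - 1), (W.d (n - 1) n).hom x ∈ LinearMap.ker (W.d n (n + 1)).hom := by
      intro x
      rw [LinearMap.mem_ker]
      have h0 : (W.d (n - 1) n ≫ W.d n (n + 1)).hom x = (0 : W.X (n-1) ⟶ W.X (n+1)).hom x := by
        rw [W.d_comp_d]
      exact h0
    have hmem' : ∀ x : U.X n, φ.hom x ∈ LinearMap.ker (W.d n (n + 1)).hom := by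
      intro x
      rw [LinearMap.mem_ker]
      have h0 : (φ ≫ W.d n (n + 1)).hom x = (0 : U.X n ⟶ W.X (n+1)).hom x := by rw [hφ]
      simpa using h0
    set f1 : W.X (n - 1) →ₗ[A] LinearMap.ker (W.d n (n + 1)).hom :=
      LinearMap.codRestrict _ (W.d (n - 1) n).hom hmem with hf1
    set g1 : U.X n →ₗ[A] LinearMap.ker (W.d n (n + 1)).hom :=
      LinearMap.codRestrict _ φ.hom hmem' with hg1
    have hsurj : Function.Surjective f1 := by
      rintro ⟨y, hy⟩
      obtain ⟨x, hx⟩ := hex y hy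
      exact ⟨x, Subtype.ext hx⟩
    obtain ⟨l, hl⟩ := Module.projective_lifting_property f1 g1 hsurj
    refine ⟨ModuleCat.ofHom l, ?_⟩
    apply ModuleCat.hom_ext
    apply LinearMap.ext
    intro x
    exact congrArg Subtype.val (DFunLike.congr_fun hl x)
  -- The base family of degree `-1` maps, defined using the homotopy `h` in degrees `≥ m`.
  set σ₀ : ∀ p q : ℤ, U.X p ⟶ W.X q := fun p q =>
    if hpq : m ≤ p ∧ q + 1 = p then @inv _ _ _ _ (i.f p) (heq p hpq.1) ≫ h.hom p q else 0
    with hσ₀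
  have base : ∀ n : ℤ, m ≤ n →
      g.f n = U.d n (n + 1) ≫ σ₀ (n + 1) n + σ₀ n (n - 1) ≫ W.d (n - 1) n := by
    intro n hn
    have hcm := h.comm n
    rw [dNext_eq h.hom (show (ComplexShape.up ℤ).Rel n (n + 1) from rfl),
        prevD_eq h.hom (show (ComplexShape.up ℤ).Rel (n - 1) n from by simp)] at hcm
    simp only [HomologicalComplex.comp_f, HomologicalComplex.zero_f, add_zero] at hcm
    haveI := heq n hn
    haveI := heq (n + 1) (by omega)
    rw [show σ₀ (n + 1) n = inv (i.f (n + 1)) ≫ h.hom (n + 1) n from dif_pos ⟨by omega, rfl⟩,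
        show σ₀ n (n - 1) = inv (i.f n) ≫ h.hom n (n - 1) from dif_pos ⟨hn, by omega⟩]
    rw [← cancel_epi (i.f n), hcm]
    rw [Preadditive.comp_add]
    congr 1
    · simp [HomologicalComplex.Hom.comm_assoc]
    · simp
  -- The extension step.
  have step : ∀ n₁ : ℤ, n₁ < m → ∀ σ : ∀ p q : ℤ, U.X p ⟶ W.X q,
      (∀ n : ℤ, n₁ + 1 ≤ n →
        g.f n = U.d n (n + 1) ≫ σ (n + 1) n + σ n (n - 1) ≫ W.d (n - 1) n) →
      ∃ σ' : ∀ p q : ℤ, U.X p ⟶ W.X q,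
        (∀ n : ℤ, n₁ ≤ n →
          g.f n = U.d n (n + 1) ≫ σ' (n + 1) n + σ' n (n - 1) ≫ W.d (n - 1) n) ∧
        ∀ p q : ℤ, p ≠ n₁ → σ' p q = σ p q := by
    intro n₁ hn₁ σ hσ
    have hφ : (g.f n₁ - U.d n₁ (n₁ + 1) ≫ σ (n₁ + 1) n₁) ≫ W.d n₁ (n₁ + 1) = 0 := by
      have hc := hσ (n₁ + 1) le_rfl
      rw [show n₁ + 1 - 1 = n₁ by ring] at hc
      have hgc : g.f n₁ ≫ W.d n₁ (n₁ + 1) = U.d n₁ (n₁ + 1) ≫ g.f (n₁ + 1) :=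
        g.comm n₁ (n₁ + 1)
      rw [Preadditive.sub_comp, Category.assoc, hgc, hc, Preadditive.comp_add]
      simp
    obtain ⟨t, ht⟩ := key n₁ (by omega) _ hφ
    refine ⟨fun p q =>
      if hpq : p = n₁ ∧ q = n₁ - 1 then
        eqToHom (by rw [hpq.1]) ≫ t ≫ eqToHom (by rw [hpq.2]) else σ p q, ?_, ?_⟩
    · intro n hn
      beta_reduce
      rcases eq_or_lt_of_le hn with h1 | h1
      · obtain rfl := h1
        rw [dif_neg (by omega : ¬((n₁ + 1 = n₁) ∧ (n₁ = n₁ - 1))),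
          dif_pos ⟨rfl, rfl⟩]
        simp only [eqToHom_refl, Category.id_comp, Category.comp_id]
        rw [ht]
        abel
      · rw [dif_neg (by omega : ¬((n + 1 = n₁) ∧ (n = n₁ - 1))),
          dif_neg (by omega : ¬((n = n₁) ∧ (n - 1 = n₁ - 1)))]
        exact hσ n (by omega)
    · intro p q hp
      beta_reduce
      exact dif_neg (fun hc => hp hc.1)
  -- Iterate the extension step downwards.
  choose stepF hstep1 hstep2 using step
  let Fseq : ∀ k : ℕ, {σ : ∀ p q : ℤ, U.X p ⟶ W.X q //
      ∀ n : ℤ, m - (k : ℤ) ≤ n →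
        g.f n = U.d n (n + 1) ≫ σ (n + 1) n + σ n (n - 1) ≫ W.d (n - 1) n} :=
    fun k => Nat.rec
      ⟨σ₀, fun n hn => base n (by rw [show ((Nat.zero : ℕ) : ℤ) = 0 from rfl] at hn; omega)⟩
      (fun k ih => ⟨stepF (m - (k : ℤ) - 1) (by omega) ih.1 (fun n hn => ih.2 n (by omega)),
        fun n hn => hstep1 (m - (k : ℤ) - 1) (by omega) ih.1
          (fun n hn => ih.2 n (by omega)) n (by push_cast [Nat.succ_eq_add_one] at hn; omega)⟩) k
  have hcompat : ∀ (k : ℕ) (p q : ℤ), p ≠ m - (k : ℤ) - 1 →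
      (Fseq (k + 1)).1 p q = (Fseq k).1 p q :=
    fun k => hstep2 (m - (k : ℤ) - 1) (by omega) (Fseq k).1
      (fun n hn => (Fseq k).2 n (by omega))
  have stable : ∀ (p : ℤ) (k : ℕ), (m - p).toNat ≤ k → ∀ q : ℤ,
      (Fseq k).1 p q = (Fseq (m - p).toNat).1 p q := by
    intro p k
    induction k with
    | zero =>
      intro hk q
      rw [Nat.le_zero.mp hk]
    | succ k ih =>
      intro hk q
      by_cases hk2 : (m - p).toNat ≤ k
      · rw [hcompat k p q (by omega), ih hk2 q]
      · have h3 : (m - p).toNat = k + 1 := by omega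
        rw [h3]
  have final : ∀ n : ℤ,
      g.f n = U.d n (n + 1) ≫ (Fseq (m - (n + 1)).toNat).1 (n + 1) n +
        (Fseq (m - n).toNat).1 n (n - 1) ≫ W.d (n - 1) n := by
    intro n
    have hc := (Fseq ((m - n).toNat + 1)).2 n (by push_cast; omega)
    rw [stable (n + 1) ((m - n).toNat + 1) (by omega) n,
        stable n ((m - n).toNat + 1) (by omega) (n - 1)] at hc
    exact hc
  exact ⟨{
    hom := fun p q => if q + 1 = p then (Fseq (m - p).toNat).1 p q else 0
    zero := fun p q hpq => if_neg hpq
    comm := fun n => by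
      rw [dNext_eq _ (show (ComplexShape.up ℤ).Rel n (n + 1) from rfl),
          prevD_eq _ (show (ComplexShape.up ℤ).Rel (n - 1) n from by simp)]
      beta_reduce
      rw [if_pos rfl, if_pos (show n - 1 + 1 = n by omega),
        HomologicalComplex.zero_f, add_zero]
      exact final n }⟩
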